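/- Let G be a locally compact Abelian torsion group (every element has finite order) for which P⁺(G,ℂ) is nonempty. Then P⁺_proj(G,ℂ^ℓ) = P⁺(G,ℂ^ℓ) for every ℓ ∈ ℕ: every continuous translation invariant matrix valued kernel on G all of whose scalar valued projections are strictly positive definite is itself strictly positive definite. -/

import Mathlib

open scoped ComplexOrder

/-- Complex "inner product" on finite tuples, linear in the first argument and
conjugate-linear in the second: `cip v w = ∑ i, v i * conj (w i)`. -/
noncomputable def cip {ι : Type*} [Fintype ι] (v w : ι → ℂ) : ℂ :=
  ∑ i, v i * (starRingEnd ℂ) (w i)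

/-- A matrix valued kernel is positive definite. -/
def IsPDMat {X : Type*} {ℓ : ℕ} (K : X → X → Matrix (Fin ℓ) (Fin ℓ) ℂ) : Prop :=
  ∀ (n : ℕ) (x : Fin n → X), Function.Injective x →
    ∀ v : Fin n → Fin ℓ → ℂ,
      0 ≤ ∑ μ : Fin n, ∑ ν : Fin n, cip ((K (x μ) (x ν)).mulVec (v μ)) (v ν)

/-- A matrix valued kernel is strictly positive definite. -/
def IsSPDMat {X : Type*} {ℓ : ℕ} (K : X → X → Matrix (Fin ℓ) (Fin ℓ) ℂ) : Prop :=
  ∀ (n : ℕ) (x : Fin n → X), Function.Injective x →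
    ∀ v : Fin n → Fin ℓ → ℂ, (∃ μ, v μ ≠ 0) →
      0 < ∑ μ : Fin n, ∑ ν : Fin n, cip ((K (x μ) (x ν)).mulVec (v μ)) (v ν)

/-- A scalar valued kernel is positive definite. -/
def IsPDKer {X : Type*} (k : X → X → ℂ) : Prop :=
  ∀ (n : ℕ) (x : Fin n → X), Function.Injective x →
    ∀ c : Fin n → ℂ,
      0 ≤ ∑ μ : Fin n, ∑ ν : Fin n, c μ * (starRingEnd ℂ) (c ν) * k (x μ) (x ν)

/-- A scalar valued kernel is strictly positive definite. -/
def IsSPDKer {X : Type*} (k : X → X → ℂ) : Prop :=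
  ∀ (n : ℕ) (x : Fin n → X), Function.Injective x →
    ∀ c : Fin n → ℂ, (∃ μ, c μ ≠ 0) →
      0 < ∑ μ : Fin n, ∑ ν : Fin n, c μ * (starRingEnd ℂ) (c ν) * k (x μ) (x ν)

/-- The scalar valued projection `K_v(x,y) = ⟨K(x,y)v, v⟩` of a matrix valued kernel. -/
noncomputable def projKer {X : Type*} {ℓ : ℕ} (K : X → X → Matrix (Fin ℓ) (Fin ℓ) ℂ)
    (v : Fin ℓ → ℂ) : X → X → ℂ :=
  fun x y => cip ((K x y).mulVec v) v

section helpers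
variable {ι : Type*} [Fintype ι]

lemma cip_sum_left {α : Type*} (s : Finset α) (u : α → ι → ℂ) (w : ι → ℂ) :
    cip (∑ a ∈ s, u a) w = ∑ a ∈ s, cip (u a) w := by
  simp [cip, Finset.sum_mul, Finset.sum_apply]
  rw [Finset.sum_comm]

lemma cip_smul_left (c : ℂ) (u w : ι → ℂ) : cip (c • u) w = c * cip u w := by
  simp [cip, Finset.mul_sum]; exact Finset.sum_congr rfl fun i _ => by ring

lemma cip_smul_right (c : ℂ) (u w : ι → ℂ) :
    cip u (c • w) = (starRingEnd ℂ) c * cip u w := by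
  simp [cip, Finset.mul_sum]; exact Finset.sum_congr rfl fun i _ => by ring

lemma cip_sum_right {α : Type*} (s : Finset α) (u : ι → ℂ) (w : α → ι → ℂ) :
    cip u (∑ a ∈ s, w a) = ∑ a ∈ s, cip u (w a) := by
  simp [cip, Finset.mul_sum, Finset.sum_apply, map_sum]
  rw [Finset.sum_comm]

lemma cip_mulVec_sum_mat {α : Type*} {ℓ : ℕ} (s : Finset α) (A : α → Matrix (Fin ℓ) (Fin ℓ) ℂ)
    (u w : Fin ℓ → ℂ) :
    cip ((∑ a ∈ s, A a).mulVec u) w = ∑ a ∈ s, cip ((A a).mulVec u) w := by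
  classical
  rw [show (∑ a ∈ s, A a).mulVec u = ∑ a ∈ s, (A a).mulVec u from ?_, cip_sum_left]
  · induction s using Finset.induction with
    | empty => simp [Matrix.zero_mulVec]
    | insert _ _ h ih => simp [Finset.sum_insert h, Matrix.add_mulVec, ih]

lemma cip_mulVec_smul_mat {ℓ : ℕ} (c : ℂ) (A : Matrix (Fin ℓ) (Fin ℓ) ℂ) (u w : Fin ℓ → ℂ) :
    cip ((c • A).mulVec u) w = c * cip (A.mulVec u) w := by
  rw [Matrix.smul_mulVec, cip_smul_left]

lemma mulVec_sum_smul {α : Type*} {ℓ : ℕ} (A : Matrix (Fin ℓ) (Fin ℓ) ℂ) (s : Finset α)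
    (a : α → ℂ) (u : α → Fin ℓ → ℂ) :
    A.mulVec (∑ x ∈ s, a x • u x) = ∑ x ∈ s, a x • A.mulVec (u x) := by
  rw [← Matrix.mulVecLin_apply, map_sum]
  simp only [map_smul, Matrix.mulVecLin_apply]

lemma cip_mulVec_sum_smul_left {α : Type*} {ℓ : ℕ} (A : Matrix (Fin ℓ) (Fin ℓ) ℂ) (s : Finset α)
    (a : α → ℂ) (u : α → Fin ℓ → ℂ) (W : Fin ℓ → ℂ) :
    cip (A.mulVec (∑ x ∈ s, a x • u x)) W = ∑ x ∈ s, a x * cip (A.mulVec (u x)) W := by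
  rw [mulVec_sum_smul, cip_sum_left]
  exact Finset.sum_congr rfl fun x _ => cip_smul_left _ _ _

lemma cip_sum_smul_right {α : Type*} (V : ι → ℂ) (s : Finset α) (a : α → ℂ) (w : α → ι → ℂ) :
    cip V (∑ x ∈ s, a x • w x) = ∑ x ∈ s, (starRingEnd ℂ) (a x) * cip V (w x) := by
  rw [cip_sum_right]
  exact Finset.sum_congr rfl fun x _ => cip_smul_right _ _ _

lemma mulVec_smul' {ℓ : ℕ} (A : Matrix (Fin ℓ) (Fin ℓ) ℂ) (c : ℂ) (u : Fin ℓ → ℂ) :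
    A.mulVec (c • u) = c • A.mulVec u := by
  rw [← Matrix.mulVecLin_apply, map_smul, Matrix.mulVecLin_apply]

lemma pos_of_natmul {m : ℕ} {z : ℂ} (h : 0 < (m : ℂ) * z) : 0 < z := by
  rcases Nat.eq_zero_or_pos m with rfl | hm
  · simp at h
  rw [Complex.lt_def] at h ⊢
  simp only [Complex.zero_re, Complex.zero_im, Complex.mul_re, Complex.mul_im,
    Complex.natCast_re, Complex.natCast_im] at h ⊢
  have hm' : (0:ℝ) < m := by exact_mod_cast hm
  constructor
  · nlinarith [h.1]
  · nlinarith [h.2]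
end helpers

section chars
variable {H : Type*} [CommGroup H] [Finite H]

lemma conj_char (χ : H →* ℂˣ) (h : H) :
    (starRingEnd ℂ) (χ h : ℂ) = ((χ h)⁻¹ : ℂˣ) := by
  have hexp : ((χ h : ℂ)) ^ Monoid.exponent H = 1 := by
    rw [← Units.val_pow_eq_pow_val, ← map_pow, Monoid.pow_exponent_eq_one, map_one, Units.val_one]
  have h2 : Monoid.exponent H ≠ 0 := Monoid.exponent_ne_zero_of_finite
  have habs : ‖(χ h : ℂ)‖ = 1 := by
    have h1 : ‖(χ h : ℂ)‖ ^ Monoid.exponent H = 1 := by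
      rw [← norm_pow, hexp, norm_one]
    rcases (pow_eq_one_iff_of_ne_zero h2).mp h1 with h' | h'
    · exact h'
    · nlinarith [norm_nonneg (χ h : ℂ), h'.1]
  have this1 : (starRingEnd ℂ) (χ h : ℂ) * (χ h : ℂ) = 1 := by
    rw [mul_comm, Complex.mul_conj]
    norm_cast
    rw [Complex.normSq_eq_norm_sq, habs]; norm_num
  rw [Units.val_inv_eq_inv_val]
  exact eq_inv_of_mul_eq_one_left this1

lemma conj_char_mul (χ : H →* ℂˣ) (a b : H) :
    (starRingEnd ℂ) (χ a : ℂ) * (χ b : ℂ) = (χ (a⁻¹ * b) : ℂ) := by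
  rw [conj_char, map_mul, map_inv, Units.val_mul]

lemma char_sum_eq_zero {A : Type*} [CommGroup A] [Fintype A] (φ : A →* ℂ)
    {a : A} (ha : φ a ≠ 1) : ∑ x : A, φ x = 0 := by
  have key : φ a * ∑ x : A, φ x = ∑ x : A, φ x := by
    rw [Finset.mul_sum]
    exact Fintype.sum_equiv (Equiv.mulLeft a) _ _ (fun x => by simp [map_mul])
  have h0 : (φ a - 1) * ∑ x : A, φ x = 0 := by linear_combination key
  rcases mul_eq_zero.mp h0 with h | h
  · exact absurd (sub_eq_zero.mp h) ha
  · exact h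

lemma dual_finite : Finite (H →* ℂˣ) := by
  haveI : NeZero ((Monoid.exponent H : ℕ) : ℂ) :=
    ⟨by exact_mod_cast (Monoid.exponent_ne_zero_of_finite (G := H))⟩
  obtain ⟨e⟩ := CommGroup.monoidHom_mulEquiv_of_hasEnoughRootsOfUnity H ℂ
  exact Finite.of_equiv H e.symm.toEquiv

noncomputable def evalHom (g : H) : (H →* ℂˣ) →* ℂ where
  toFun χ := (χ g : ℂ)
  map_one' := by simp
  map_mul' χ χ' := by simp

lemma sum_dual [Fintype (H →* ℂˣ)] [DecidableEq H] (g : H) :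
    ∑ χ : H →* ℂˣ, (χ g : ℂ) = if g = 1 then (Fintype.card (H →* ℂˣ) : ℂ) else 0 := by
  split_ifs with hg
  · subst hg
    rw [Finset.sum_congr rfl (fun χ _ => by rw [map_one, Units.val_one]), Finset.sum_const,
      Finset.card_univ, nsmul_eq_mul, mul_one]
  · haveI : NeZero ((Monoid.exponent H : ℕ) : ℂ) :=
      ⟨by exact_mod_cast (Monoid.exponent_ne_zero_of_finite (G := H))⟩
    obtain ⟨χ₀, hχ₀⟩ := CommGroup.exists_apply_ne_one_of_hasEnoughRootsOfUnity H ℂ hg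
    have hne : evalHom g χ₀ ≠ 1 := by
      simpa [evalHom, Units.val_eq_one] using hχ₀
    exact char_sum_eq_zero (evalHom g) hne
end chars

lemma key_lemma {ℓ : ℕ} {H : Type*} [CommGroup H] [Finite H]
    (f : H → Matrix (Fin ℓ) (Fin ℓ) ℂ)
    (hproj : ∀ v : Fin ℓ → ℂ, v ≠ 0 →
      IsSPDKer (fun x y : H => cip ((f (x * y⁻¹)).mulVec v) v)) :
    IsSPDMat (fun x y : H => f (x * y⁻¹)) := by
  classical
  haveI : Fintype H := Fintype.ofFinite H
  haveI : Finite (H →* ℂˣ) := dual_finite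
  haveI : Fintype (H →* ℂˣ) := Fintype.ofFinite _
  intro n y hy v hv
  set N := Fintype.card (H →* ℂˣ) with hN
  have hN0 : N ≠ 0 := Fintype.card_ne_zero
  set B : (H →* ℂˣ) → Matrix (Fin ℓ) (Fin ℓ) ℂ := fun χ => ∑ g : H, (χ g : ℂ) • f g with hB
  -- Step A: B χ is strictly positive
  have hBexp : ∀ (χ : H →* ℂˣ) (u w : Fin ℓ → ℂ),
      cip ((B χ).mulVec u) w = ∑ g : H, (χ g : ℂ) * cip ((f g).mulVec u) w := by
    intro χ u w
    rw [hB, cip_mulVec_sum_mat]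
    exact Finset.sum_congr rfl fun g _ => cip_mulVec_smul_mat _ _ _ _
  have hBpos : ∀ (χ : H →* ℂˣ) (w : Fin ℓ → ℂ), w ≠ 0 → 0 < cip ((B χ).mulVec w) w := by
    intro χ w hw
    set e : Fin (Fintype.card H) ≃ H := (Fintype.equivFin H).symm with he
    have h1 := hproj w hw (Fintype.card H) e e.injective (fun μ => (χ (e μ) : ℂ))
      ⟨(Fintype.equivFin H) 1, Units.ne_zero _⟩
    set F : H → ℂ := fun g => (χ g : ℂ) * cip ((f g).mulVec w) w with hF
    have h2 : ∀ μ ν : Fin (Fintype.card H),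
        (χ (e μ) : ℂ) * (starRingEnd ℂ) (χ (e ν) : ℂ) * cip ((f (e μ * (e ν)⁻¹)).mulVec w) w
        = F (e μ * (e ν)⁻¹) := by
      intro μ ν
      rw [hF, mul_comm ((χ (e μ) : ℂ)) _, conj_char_mul, mul_comm ((e ν)⁻¹) (e μ)]
    rw [Finset.sum_congr rfl (fun μ _ => Finset.sum_congr rfl (fun ν _ => h2 μ ν)),
      Finset.sum_comm] at h1
    have h3 : ∀ ν : Fin (Fintype.card H),
        ∑ μ : Fin (Fintype.card H), F (e μ * (e ν)⁻¹) = ∑ g : H, F g := by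
      intro ν
      exact Fintype.sum_equiv (e.trans (Equiv.mulRight (e ν)⁻¹)) _ _ (fun μ => rfl)
    rw [Finset.sum_congr rfl (fun ν _ => h3 ν), Finset.sum_const, Finset.card_univ,
      nsmul_eq_mul] at h1
    have h4 : 0 < ∑ g : H, F g := pos_of_natmul h1
    rw [hBexp]
    exact h4
  -- the vectors w χ
  set w : (H →* ℂˣ) → Fin ℓ → ℂ :=
    fun χ => ∑ μ : Fin n, (starRingEnd ℂ) (χ (y μ) : ℂ) • v μ with hw
  -- Step B: the key identity
  set T : (H →* ℂˣ) → Fin n → Fin n → H → ℂ := fun χ μ ν g =>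
    (starRingEnd ℂ) (χ (y μ) : ℂ) * (χ (y ν) : ℂ) * (χ g : ℂ)
      * cip ((f g).mulVec (v μ)) (v ν) with hT
  have hterm : ∀ χ : H →* ℂˣ,
      cip ((B χ).mulVec (w χ)) (w χ) = ∑ μ : Fin n, ∑ ν : Fin n, ∑ g : H, T χ μ ν g := by
    intro χ
    simp only [hw, hT]
    rw [cip_mulVec_sum_smul_left]
    refine Finset.sum_congr rfl fun μ _ => ?_
    rw [cip_sum_smul_right, Finset.mul_sum]
    refine Finset.sum_congr rfl fun ν _ => ?_
    rw [Complex.conj_conj, hBexp, Finset.mul_sum, Finset.mul_sum]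
    refine Finset.sum_congr rfl fun g _ => ?_
    ring
  have hswap : ∑ χ : H →* ℂˣ, ∑ μ : Fin n, ∑ ν : Fin n, ∑ g : H, T χ μ ν g
      = ∑ μ : Fin n, ∑ ν : Fin n, ∑ g : H, ∑ χ : H →* ℂˣ, T χ μ ν g := by
    rw [Finset.sum_comm]
    refine Finset.sum_congr rfl fun μ _ => ?_
    rw [Finset.sum_comm]
    refine Finset.sum_congr rfl fun ν _ => ?_
    rw [Finset.sum_comm]
  have hcond : ∀ (a b g : H), a⁻¹ * (b * g) = 1 ↔ g = a * b⁻¹ := by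
    intro a b g
    rw [inv_mul_eq_one]
    constructor
    · intro h; rw [h, mul_comm b g, mul_inv_cancel_right]
    · intro h; rw [h, mul_comm a b⁻¹, mul_inv_cancel_left]
  have hchi : ∀ (μ ν : Fin n) (g : H), ∑ χ : H →* ℂˣ, T χ μ ν g
      = (if g = y μ * (y ν)⁻¹ then ((Fintype.card (H →* ℂˣ) : ℕ) : ℂ) else 0)
        * cip ((f g).mulVec (v μ)) (v ν) := by
    intro μ ν g
    have h5 : ∀ χ : H →* ℂˣ, T χ μ ν g
        = (χ ((y μ)⁻¹ * (y ν * g)) : ℂ) * cip ((f g).mulVec (v μ)) (v ν) := by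
      intro χ
      simp only [hT]
      rw [mul_assoc ((starRingEnd ℂ) ((χ (y μ) : ℂ))), ← Units.val_mul, ← map_mul,
        conj_char_mul]
    rw [Finset.sum_congr rfl fun χ _ => h5 χ, ← Finset.sum_mul, sum_dual]
    congr 1
    by_cases hg : g = y μ * (y ν)⁻¹
    · rw [if_pos ((hcond _ _ _).mpr hg), if_pos hg]
    · rw [if_neg (fun hc => hg ((hcond _ _ _).mp hc)), if_neg hg]
  have hgsum : ∀ (μ ν : Fin n), ∑ g : H, ∑ χ : H →* ℂˣ, T χ μ ν g
      = ((Fintype.card (H →* ℂˣ) : ℕ) : ℂ) * cip ((f (y μ * (y ν)⁻¹)).mulVec (v μ)) (v ν) := by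
    intro μ ν
    rw [Finset.sum_congr rfl fun g _ => hchi μ ν g]
    simp only [ite_mul, zero_mul]
    rw [Finset.sum_ite_eq' Finset.univ (y μ * (y ν)⁻¹)
      (fun g => ((Fintype.card (H →* ℂˣ) : ℕ) : ℂ) * cip ((f g).mulVec (v μ)) (v ν)),
      if_pos (Finset.mem_univ _)]
  have hkey : ((Fintype.card (H →* ℂˣ) : ℕ) : ℂ)
        * (∑ μ : Fin n, ∑ ν : Fin n, cip ((f (y μ * (y ν)⁻¹)).mulVec (v μ)) (v ν))
      = ∑ χ : H →* ℂˣ, cip ((B χ).mulVec (w χ)) (w χ) := by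
    rw [Finset.sum_congr rfl fun χ _ => hterm χ, hswap, Finset.mul_sum]
    refine Finset.sum_congr rfl fun μ _ => ?_
    rw [Finset.mul_sum]
    exact Finset.sum_congr rfl fun ν _ => (hgsum μ ν).symm
  -- Step C : some w χ is nonzero
  have hwne : ∃ χ : H →* ℂˣ, w χ ≠ 0 := by
    by_contra hcon
    push_neg at hcon
    obtain ⟨μ₀, hμ₀⟩ := hv
    obtain ⟨i, hi⟩ : ∃ i, v μ₀ i ≠ 0 := by
      by_contra h; push_neg at h; exact hμ₀ (funext h)
    have h0 : ∀ χ : H →* ℂˣ, ∑ μ : Fin n, (starRingEnd ℂ) (χ (y μ) : ℂ) * v μ i = 0 := by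
      intro χ
      have h00 := congrFun (hcon χ) i
      simpa [hw, Finset.sum_apply, Pi.smul_apply, smul_eq_mul] using h00
    have h6 : ∀ χ : H →* ℂˣ,
        (χ (y μ₀) : ℂ) * ∑ μ : Fin n, (starRingEnd ℂ) (χ (y μ) : ℂ) * v μ i
        = ∑ μ : Fin n, (χ ((y μ)⁻¹ * y μ₀) : ℂ) * v μ i := by
      intro χ
      rw [Finset.mul_sum]
      refine Finset.sum_congr rfl fun μ _ => ?_
      rw [← conj_char_mul χ (y μ) (y μ₀)]; ring
    have h8 : ∀ μ : Fin n, (∑ χ : H →* ℂˣ, (χ ((y μ)⁻¹ * y μ₀) : ℂ))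
        = if μ = μ₀ then ((Fintype.card (H →* ℂˣ) : ℕ) : ℂ) else 0 := by
      intro μ
      rw [sum_dual]
      by_cases hμ : μ = μ₀
      · subst hμ; rw [if_pos (by group), if_pos rfl]
      · rw [if_neg (fun hc => hμ (hy (inv_mul_eq_one.mp hc))), if_neg hμ]
    have h7 : (0:ℂ) = ((Fintype.card (H →* ℂˣ) : ℕ) : ℂ) * v μ₀ i := by
      calc (0:ℂ) = ∑ χ : H →* ℂˣ, (χ (y μ₀) : ℂ)
            * ∑ μ : Fin n, (starRingEnd ℂ) (χ (y μ) : ℂ) * v μ i := by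
            symm; exact Finset.sum_eq_zero fun χ _ => by rw [h0 χ, mul_zero]
        _ = ∑ χ : H →* ℂˣ, ∑ μ : Fin n, (χ ((y μ)⁻¹ * y μ₀) : ℂ) * v μ i :=
            Finset.sum_congr rfl fun χ _ => h6 χ
        _ = ∑ μ : Fin n, ∑ χ : H →* ℂˣ, (χ ((y μ)⁻¹ * y μ₀) : ℂ) * v μ i := Finset.sum_comm
        _ = ∑ μ : Fin n, (∑ χ : H →* ℂˣ, (χ ((y μ)⁻¹ * y μ₀) : ℂ)) * v μ i :=
            Finset.sum_congr rfl fun μ _ => (Finset.sum_mul _ _ _).symm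
        _ = ∑ μ : Fin n, (if μ = μ₀ then ((Fintype.card (H →* ℂˣ) : ℕ) : ℂ) else 0) * v μ i :=
            Finset.sum_congr rfl fun μ _ => by rw [h8 μ]
        _ = ((Fintype.card (H →* ℂˣ) : ℕ) : ℂ) * v μ₀ i := by
            simp only [ite_mul, zero_mul]
            rw [Finset.sum_ite_eq' Finset.univ μ₀
              (fun μ => ((Fintype.card (H →* ℂˣ) : ℕ) : ℂ) * v μ i), if_pos (Finset.mem_univ _)]
    have hNC : ((Fintype.card (H →* ℂˣ) : ℕ) : ℂ) ≠ 0 := by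
      exact_mod_cast (Fintype.card_ne_zero (α := H →* ℂˣ))
    rcases mul_eq_zero.mp h7.symm with h | h
    · exact hNC h
    · exact hi h
  -- conclusion
  have hge : ∀ χ : H →* ℂˣ, 0 ≤ cip ((B χ).mulVec (w χ)) (w χ) := by
    intro χ
    by_cases h : w χ = 0
    · rw [h, Matrix.mulVec_zero]; simp [cip]
    · exact le_of_lt (hBpos χ _ h)
  obtain ⟨χ₀, hχ₀⟩ := hwne
  have hpos : 0 < ∑ χ : H →* ℂˣ, cip ((B χ).mulVec (w χ)) (w χ) :=
    Finset.sum_pos' (fun χ _ => hge χ) ⟨χ₀, Finset.mem_univ _, hBpos χ₀ _ hχ₀⟩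
  rw [← hkey] at hpos
  exact pos_of_natmul hpos

/-- Let `G` be a locally compact Abelian torsion group for which `P⁺(G,ℂ)` is
nonempty.  Then `P⁺_proj(G,ℂ^ℓ) = P⁺(G,ℂ^ℓ)` for every `ℓ ∈ ℕ`: every continuous translation
invariant matrix valued kernel on `G` all of whose scalar valued projections are strictly
positive definite is itself strictly positive definite. -/
theorem stmt_10 {G : Type*} [CommGroup G] [TopologicalSpace G] [IsTopologicalGroup G]
    [LocallyCompactSpace G]
    (htors : ∀ g : G, IsOfFinOrder g)
    (hne : ∃ k : G → G → ℂ,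
      (Continuous fun p : G × G => k p.1 p.2) ∧
      (∀ g x y : G, k (g * x) (g * y) = k x y) ∧
      IsSPDKer k) :
    ∀ ℓ : ℕ, 1 ≤ ℓ →
      {K : G → G → Matrix (Fin ℓ) (Fin ℓ) ℂ |
        (Continuous fun p : G × G => K p.1 p.2) ∧
        (∀ g x y : G, K (g * x) (g * y) = K x y) ∧
        ∀ v : Fin ℓ → ℂ, v ≠ 0 → IsSPDKer (projKer K v)} =
      {K : G → G → Matrix (Fin ℓ) (Fin ℓ) ℂ |
        (Continuous fun p : G × G => K p.1 p.2) ∧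
        (∀ g x y : G, K (g * x) (g * y) = K x y) ∧ IsSPDMat K} := by
  intro ℓ hℓ
  ext K
  simp only [Set.mem_setOf_eq]
  constructor
  · rintro ⟨hc, hinv, hproj⟩
    refine ⟨hc, hinv, ?_⟩
    intro n x hx v hv
    set H : Subgroup G := Subgroup.closure (Set.range x) with hH
    haveI : Finite (Set.range x) := Set.finite_range x
    haveI : Group.FG H := Group.closure_finite_fg _
    haveI : Finite H := by
      refine CommGroup.finite_of_fg_torsion H (fun h => ?_)
      obtain ⟨m, hm, hpow⟩ := isOfFinOrder_iff_pow_eq_one.mp (htors (↑h : G))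
      exact isOfFinOrder_iff_pow_eq_one.mpr ⟨m, hm, Subtype.ext (by push_cast; exact hpow)⟩
    set y : Fin n → H := fun μ => ⟨x μ, Subgroup.subset_closure (Set.mem_range_self μ)⟩ with hy'
    have hy : Function.Injective y := fun a b hab => hx (congrArg Subtype.val hab)
    have hKf : ∀ a b : G, K a b = K (a * b⁻¹) 1 := by
      intro a b
      have hab : b * (a * b⁻¹) = a := by rw [mul_comm a b⁻¹, mul_inv_cancel_left]
      calc K a b = K (b * (a * b⁻¹)) (b * 1) := by rw [hab, mul_one]
        _ = K (a * b⁻¹) 1 := hinv b (a * b⁻¹) 1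
    set f : H → Matrix (Fin ℓ) (Fin ℓ) ℂ := fun h => K (↑h) 1 with hf
    have hfK : ∀ a b : H, K (↑a) (↑b) = f (a * b⁻¹) := by
      intro a b
      simp only [hf]
      rw [hKf (↑a) (↑b)]
      norm_cast
    have hproj' : ∀ u : Fin ℓ → ℂ, u ≠ 0 →
        IsSPDKer (fun a b : H => cip ((f (a * b⁻¹)).mulVec u) u) := by
      intro u hu m z hz c hcne
      have h1 := hproj u hu m (fun j => (↑(z j) : G)) (fun a b hab => hz (Subtype.ext hab)) c hcne
      refine lt_of_lt_of_eq h1 (Finset.sum_congr rfl fun a _ => Finset.sum_congr rfl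
        fun b _ => ?_)
      simp only [projKer]
      rw [hfK]
    have hspd := key_lemma f hproj' n y hy v hv
    have heq : ∀ μ ν : Fin n,
        cip ((K (x μ) (x ν)).mulVec (v μ)) (v ν)
          = cip ((f (y μ * (y ν)⁻¹)).mulVec (v μ)) (v ν) := by
      intro μ ν
      rw [show x μ = ((y μ : H) : G) from rfl, show x ν = ((y ν : H) : G) from rfl, hfK]
    rw [Finset.sum_congr rfl fun μ _ => Finset.sum_congr rfl fun ν _ => heq μ ν]
    exact hspd
  · rintro ⟨hc, hinv, hspd⟩
    refine ⟨hc, hinv, ?_⟩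
    intro u hu n x hx c hcne
    obtain ⟨μ₀, hμ₀⟩ := hcne
    have h1 := hspd n x hx (fun μ => c μ • u) ⟨μ₀, smul_ne_zero hμ₀ hu⟩
    refine lt_of_lt_of_eq h1 (Finset.sum_congr rfl fun μ _ => Finset.sum_congr rfl
      fun ν _ => ?_)
    rw [mulVec_smul' , cip_smul_left, cip_smul_right]
    simp only [projKer]
    ring
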